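/- arXiv:1306.1841 — 3 statements merged into one kernel-verified Lean document; each statement's English description precedes it below -/
import Mathlib

section
/- (Cartan's lemma.) Let n ≥ 1, let ν be a finite nonnegative Borel measure on ℝⁿ with β := ν(ℝⁿ), and let ε > 0. Then there exists a set E_ε ⊆ ℝⁿ such that the one-dimensional Hausdorff content of E_ε satisfies H¹_∞(E_ε) < ε, and for every x ∉ E_ε and every r > 0, ν(B(x,r)) ≤ 10 r β / ε. -/
open MeasureTheory Metric Set
open scoped ENNReal

/-- `c_n := 2^{n-2} Γ(n/2) π^{n/2}`. -/
noncomputable def cN (n : ℕ) : ℝ :=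
  (2 : ℝ) ^ ((n : ℝ) - 2) * Real.Gamma ((n : ℝ) / 2) * Real.pi ^ ((n : ℝ) / 2)

/-- Logarithmic potential `u(x) = (1/c_n) ∫ log(|y|/|x-y|) f(y) dy`. -/
noncomputable def logPot (n : ℕ) (f : EuclideanSpace ℝ (Fin n) → ℝ)
    (x : EuclideanSpace ℝ (Fin n)) : ℝ :=
  (1 / cN n) * ∫ y, Real.log (‖y‖ / ‖x - y‖) * f y

/-- `ω` is an `A_p` weight with constant `K` (for `p > 1`):
for every ball `B`, `(⨍_B ω) · (⨍_B ω^{-1/(p-1)})^{p-1} ≤ K`. -/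
def IsApWeight (n : ℕ) (p K : ℝ) (ω : EuclideanSpace ℝ (Fin n) → ℝ) : Prop :=
  ∀ (x : EuclideanSpace ℝ (Fin n)) (r : ℝ), 0 < r →
    ((volume (ball x r)).toReal⁻¹ * ∫ y in ball x r, ω y) *
      ((volume (ball x r)).toReal⁻¹ *
        ∫ y in ball x r, (ω y) ^ (-(1 / (p - 1)) : ℝ)) ^ (p - 1) ≤ K

/-- `δ_ω(x,y) = (∫_{B_{xy}} ω)^{1/n}`, where `B_{xy}` is the closed ball with
center `(x+y)/2` and radius `|x-y|/2`. -/
noncomputable def deltaW (n : ℕ) (ω : EuclideanSpace ℝ (Fin n) → ℝ)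
    (x y : EuclideanSpace ℝ (Fin n)) : ℝ :=
  (∫ z in closedBall (midpoint ℝ x y) (dist x y / 2), ω z) ^ ((1 : ℝ) / n)

/-- `d_ω(x,y)`: infimum of `∫₀^L ω(γ(t))^{1/n} dt` over all `L ≥ 0` and all
1-Lipschitz curves `γ : [0,L] → ℝⁿ` joining `x` to `y` inside `B_{xy}`. -/
noncomputable def dW (n : ℕ) (ω : EuclideanSpace ℝ (Fin n) → ℝ)
    (x y : EuclideanSpace ℝ (Fin n)) : ℝ :=
  sInf {d : ℝ | ∃ (L : ℝ) (γ : ℝ → EuclideanSpace ℝ (Fin n)),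
    0 ≤ L ∧ LipschitzOnWith 1 γ (Set.Icc 0 L) ∧ γ 0 = x ∧ γ L = y ∧
    (∀ t ∈ Set.Icc 0 L, γ t ∈ closedBall (midpoint ℝ x y) (dist x y / 2)) ∧
    d = ∫ t in (0 : ℝ)..L, (ω (γ t)) ^ ((1 : ℝ) / n)}

/-- One-dimensional Hausdorff content: infimum of `Σᵢ diam Bᵢ` over countable
covers of `E` by balls `Bᵢ`. -/
noncomputable def H1content {n : ℕ} (E : Set (EuclideanSpace ℝ (Fin n))) : ℝ≥0∞ :=
  ⨅ (c : ℕ → EuclideanSpace ℝ (Fin n) × ℝ) (_ : E ⊆ ⋃ i, ball (c i).1 (c i).2),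
    ∑' i, ENNReal.ofReal (2 * (c i).2)


lemma H1content_le {n : ℕ} {E : Set (EuclideanSpace ℝ (Fin n))}
    (c : ℕ → EuclideanSpace ℝ (Fin n) × ℝ) (h : E ⊆ ⋃ i, ball (c i).1 (c i).2) :
    H1content E ≤ ∑' i, ENNReal.ofReal (2 * (c i).2) :=
  iInf₂_le c h

/-- Cartan's lemma. For a finite nonnegative Borel measure `ν`
with total mass `β` and `ε > 0`, there is a set `E_ε` of one-dimensional Hausdorff
content `< ε` such that `ν(B(x,r)) ≤ 10 r β / ε` for all `x ∉ E_ε` and `r > 0`. -/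
theorem cartan_lemma
    (n : ℕ) (hn : 1 ≤ n)
    (ν : Measure (EuclideanSpace ℝ (Fin n))) [IsFiniteMeasure ν]
    (ε : ℝ) (hε : 0 < ε) :
    ∃ Eε : Set (EuclideanSpace ℝ (Fin n)),
      H1content Eε < ENNReal.ofReal ε ∧
      ∀ x ∉ Eε, ∀ r : ℝ, 0 < r →
        ν (ball x r) ≤ ENNReal.ofReal (10 * r * (ν Set.univ).toReal / ε) := by
  
  classical
  set β := (ν Set.univ).toReal with hβdef
  by_cases hE0 : ∀ x : EuclideanSpace ℝ (Fin n), ∀ r : ℝ, 0 < r →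
      ν (ball x r) ≤ ENNReal.ofReal (10 * r * β / ε)
  · refine ⟨∅, ?_, fun x _ r hr => hE0 x r hr⟩
    have h := H1content_le (E := (∅ : Set (EuclideanSpace ℝ (Fin n))))
      (fun _ => ((0 : EuclideanSpace ℝ (Fin n)), (0 : ℝ))) (by simp)
    simpa using h.trans_lt (by simp [hε])
  · push_neg at hE0
    -- β > 0
    have hβ : 0 < β := by
      rcases hE0 with ⟨x, r, hr, hlt⟩
      by_contra hβ'
      push_neg at hβ'
      have hβ0 : β = 0 := le_antisymm hβ' ENNReal.toReal_nonneg
      have : ν Set.univ = 0 := by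
        have := ENNReal.toReal_eq_zero_iff (ν Set.univ)
        rcases this.mp hβ0 with h | h
        · exact h
        · exact absurd h (measure_ne_top ν _)
      have hb0 : ν (ball x r) = 0 :=
        le_antisymm (le_trans (measure_mono (subset_univ _)) (by simp [this])) zero_le
      rw [hb0] at hlt
      simp at hlt
    have hνuniv : ν Set.univ = ENNReal.ofReal β :=
      (ENNReal.ofReal_toReal (measure_ne_top ν _)).symm
    set E : Set (EuclideanSpace ℝ (Fin n)) :=
      {x | ∃ r : ℝ, 0 < r ∧ ENNReal.ofReal (10 * r * β / ε) < ν (ball x r)} with hEdef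
    -- choose radii
    have hex : ∀ x ∈ E, ∃ r : ℝ, 0 < r ∧ ENNReal.ofReal (10 * r * β / ε) < ν (ball x r) :=
      fun x hx => hx
    set r : EuclideanSpace ℝ (Fin n) → ℝ :=
      fun x => if h : x ∈ E then (hex x h).choose else 0 with hrdef
    have hrspec : ∀ x ∈ E, 0 < r x ∧ ENNReal.ofReal (10 * r x * β / ε) < ν (ball x (r x)) := by
      intro x hx
      simp only [hrdef, dif_pos hx]
      exact (hex x hx).choose_spec
    have hrbound : ∀ x ∈ E, r x ≤ ε / 10 := by
      intro x hx
      obtain ⟨hr0, hlt⟩ := hrspec x hx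
      have h1 : ENNReal.ofReal (10 * r x * β / ε) < ENNReal.ofReal β :=
        hlt.trans_le (by rw [← hνuniv]; exact measure_mono (subset_univ _))
      have h2 : 10 * r x * β / ε < β := (ENNReal.ofReal_lt_ofReal_iff hβ).mp h1
      rw [div_lt_iff₀ hε] at h2
      nlinarith
    -- Vitali
    obtain ⟨u, hut, hdisj, hcov⟩ :=
      Vitali.exists_disjoint_subfamily_covering_enlargement_closedBall E id r (ε / 10)
        hrbound 4 (by norm_num)
    simp only [id] at hdisj hcov
    have hdisj' : Pairwise (Function.onFun Disjoint fun b : ↥u =>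
        closedBall (b : EuclideanSpace ℝ (Fin n)) (r b)) :=
      fun i j hij => hdisj i.2 j.2 (fun h => hij (Subtype.ext h))
    -- u is countable
    have hcount : u.Countable := by
      have hc := MeasureTheory.Measure.countable_meas_pos_of_disjoint_iUnion (μ := ν)
        (As := fun b : ↥u => closedBall (b : EuclideanSpace ℝ (Fin n)) (r b))
        (fun _ => measurableSet_closedBall) hdisj'
      have huniv : {i : ↥u | 0 < ν (closedBall (i : EuclideanSpace ℝ (Fin n)) (r i))} = Set.univ := by
        ext b
        simp only [mem_setOf_eq, mem_univ, iff_true]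
        have := (hrspec b (hut b.2)).2
        exact lt_of_le_of_lt zero_le
          (this.trans_le (measure_mono ball_subset_closedBall))
      rw [huniv] at hc
      have : Countable ↥u := (Set.countable_univ_iff).mp hc
      exact Set.countable_coe_iff.mpr this
    have hcu : Countable ↥u := hcount.to_subtype
    obtain ⟨f, hf⟩ := Set.countable_iff_exists_injective.mp hcount
    -- key sum bound
    have hterm : ∀ b : ↥u, ENNReal.ofReal (8 * r b) ≤
        ENNReal.ofReal (4 * ε / (5 * β)) * ν (closedBall (b : EuclideanSpace ℝ (Fin n)) (r b)) := by
      intro b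
      have hb := hrspec b (hut b.2)
      have heq : (8 : ℝ) * r b = 4 * ε / (5 * β) * (10 * r b * β / ε) := by
        field_simp
        ring
      rw [heq, ENNReal.ofReal_mul (by positivity)]
      exact mul_le_mul_right (hb.2.le.trans (measure_mono ball_subset_closedBall)) _
    have hS : (∑' b : ↥u, ENNReal.ofReal (8 * r b)) ≤ ENNReal.ofReal (4 * ε / 5) := by
      calc (∑' b : ↥u, ENNReal.ofReal (8 * r b))
          ≤ ∑' b : ↥u, ENNReal.ofReal (4 * ε / (5 * β)) *
              ν (closedBall (b : EuclideanSpace ℝ (Fin n)) (r b)) := ENNReal.tsum_le_tsum hterm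
        _ = ENNReal.ofReal (4 * ε / (5 * β)) *
              ∑' b : ↥u, ν (closedBall (b : EuclideanSpace ℝ (Fin n)) (r b)) :=
            ENNReal.tsum_mul_left
        _ = ENNReal.ofReal (4 * ε / (5 * β)) *
              ν (⋃ b : ↥u, closedBall (b : EuclideanSpace ℝ (Fin n)) (r b)) := by
            rw [measure_iUnion hdisj' (fun _ => measurableSet_closedBall)]
        _ ≤ ENNReal.ofReal (4 * ε / (5 * β)) * ν Set.univ :=
            mul_le_mul_right (measure_mono (subset_univ _)) _
        _ = ENNReal.ofReal (4 * ε / 5) := by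
            rw [hνuniv, ← ENNReal.ofReal_mul (by positivity)]
            congr 1
            field_simp
    set δ : ℝ := ε / 40 with hδdef
    have hδ : 0 < δ := by positivity
    set c : ℕ → EuclideanSpace ℝ (Fin n) × ℝ :=
      fun m => if h : ∃ b : ↥u, f b = m
        then ((h.choose : EuclideanSpace ℝ (Fin n)), 4 * r h.choose + δ * (1 / 2) ^ m)
        else (0, 0) with hcdef
    -- cover
    have hcover : E ⊆ ⋃ m, ball (c m).1 (c m).2 := by
      intro a ha
      obtain ⟨b, hbu, hsub⟩ := hcov a ha
      have hra : 0 < r a := (hrspec a ha).1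
      have hmem : a ∈ closedBall b (4 * r b) :=
        hsub (mem_closedBall_self hra.le)
      set m := f ⟨b, hbu⟩ with hmdef
      have hm : ∃ b' : ↥u, f b' = m := ⟨⟨b, hbu⟩, rfl⟩
      have hch : hm.choose = ⟨b, hbu⟩ := hf hm.choose_spec
      refine mem_iUnion.mpr ⟨m, ?_⟩
      have hc1 : c m = (((⟨b, hbu⟩ : ↥u) : EuclideanSpace ℝ (Fin n)),
          4 * r ((⟨b, hbu⟩ : ↥u) : EuclideanSpace ℝ (Fin n)) + δ * (1 / 2) ^ m) := by
        simp only [hcdef, dif_pos hm, hch]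
      rw [hc1]
      simp only [mem_ball]
      have : dist a b ≤ 4 * r b := mem_closedBall.mp hmem
      have hq : 0 < δ * (1 / 2 : ℝ) ^ m := by positivity
      calc dist a b ≤ 4 * r b := this
        _ < 4 * r b + δ * (1 / 2) ^ m := by linarith
    -- sum bound
    have hg : ∀ b : ↥u,
        (fun m => if h : ∃ b' : ↥u, f b' = m then ENNReal.ofReal (8 * r h.choose) else 0) (f b)
          = ENNReal.ofReal (8 * r b) := by
      intro b
      have hm : ∃ b' : ↥u, f b' = f b := ⟨b, rfl⟩
      have hch : hm.choose = b := hf hm.choose_spec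
      simp only [dif_pos hm, hch]
    have hsum : (∑' m : ℕ, ENNReal.ofReal (2 * (c m).2)) < ENNReal.ofReal ε := by
      have hle : ∀ m : ℕ, ENNReal.ofReal (2 * (c m).2) ≤
          (if h : ∃ b' : ↥u, f b' = m then ENNReal.ofReal (8 * r h.choose) else 0)
            + ENNReal.ofReal (2 * δ * (1 / 2) ^ m) := by
        intro m
        by_cases h : ∃ b' : ↥u, f b' = m
        · simp only [hcdef, dif_pos h]
          have : (2 : ℝ) * (4 * r h.choose + δ * (1 / 2) ^ m)
              = 8 * r h.choose + 2 * δ * (1 / 2) ^ m := by ring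
          rw [this]
          exact ENNReal.ofReal_add_le
        · simp only [hcdef, dif_pos, dif_neg h]
          simp
      calc (∑' m : ℕ, ENNReal.ofReal (2 * (c m).2))
          ≤ ∑' m : ℕ, ((if h : ∃ b' : ↥u, f b' = m then ENNReal.ofReal (8 * r h.choose) else 0)
              + ENNReal.ofReal (2 * δ * (1 / 2) ^ m)) := ENNReal.tsum_le_tsum hle
        _ = (∑' m : ℕ, (if h : ∃ b' : ↥u, f b' = m then ENNReal.ofReal (8 * r h.choose) else 0))
              + ∑' m : ℕ, ENNReal.ofReal (2 * δ * (1 / 2) ^ m) := ENNReal.tsum_add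
        _ ≤ ENNReal.ofReal (4 * ε / 5) + ENNReal.ofReal (ε / 10) := by
            gcongr
            · -- first sum equals S
              have hrange : Function.support
                  (fun m => if h : ∃ b' : ↥u, f b' = m then ENNReal.ofReal (8 * r h.choose) else 0)
                    ⊆ Set.range f := by
                intro m hm
                by_contra hm'
                apply hm
                have hne : ¬ ∃ b' : ↥u, f b' = m := fun ⟨b', hb'⟩ => hm' ⟨b', hb'⟩
                exact dif_neg hne
              have := Function.Injective.tsum_eq hf hrange
              rw [← this]
              calc (∑' b : ↥u, (fun m => if h : ∃ b' : ↥u, f b' = m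
                      then ENNReal.ofReal (8 * r h.choose) else 0) (f b))
                  = ∑' b : ↥u, ENNReal.ofReal (8 * r b) := by
                    exact tsum_congr hg
                _ ≤ ENNReal.ofReal (4 * ε / 5) := hS
            · -- geometric sum
              have : ∀ m : ℕ, ENNReal.ofReal (2 * δ * (1 / 2) ^ m)
                  = ENNReal.ofReal (2 * δ) * (ENNReal.ofReal (1 / 2)) ^ m := by
                intro m
                rw [ENNReal.ofReal_mul (by positivity), ENNReal.ofReal_pow (by norm_num)]
              simp_rw [this]
              rw [ENNReal.tsum_mul_left, ENNReal.tsum_geometric]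
              have h12 : ENNReal.ofReal (1 / 2 : ℝ) = 2⁻¹ := by
                rw [one_div, ENNReal.ofReal_inv_of_pos (by norm_num)]
                norm_num
              rw [h12]
              have : (1 - (2⁻¹ : ℝ≥0∞))⁻¹ = 2 := by
                rw [ENNReal.one_sub_inv_two]
                simp
              rw [this]
              have : ENNReal.ofReal (2 * δ) * 2 = ENNReal.ofReal (4 * δ) := by
                rw [mul_comm (ENNReal.ofReal (2 * δ)) 2, ← ENNReal.ofReal_ofNat 2,
                  ← ENNReal.ofReal_mul (by norm_num)]
                congr 1
                ring
              rw [this]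
              apply ENNReal.ofReal_le_ofReal
              rw [hδdef]
              linarith
        _ = ENNReal.ofReal (4 * ε / 5 + ε / 10) := (ENNReal.ofReal_add (by positivity) (by positivity)).symm
        _ < ENNReal.ofReal ε := by
            rw [ENNReal.ofReal_lt_ofReal_iff hε]
            linarith
    refine ⟨E, lt_of_le_of_lt (H1content_le c hcover) hsum, ?_⟩
    intro x hx ρ hρ
    by_contra hcon
    exact hx ⟨ρ, hρ, not_le.mp hcon⟩
end

section
/- Let n ≥ 2 and let f : ℝⁿ → ℝ be continuous, nonnegative and Lebesgue integrable with β := ∫_{ℝⁿ} f dx, such that y ↦ log(|y|/|x−y|) f(y) is Lebesgue integrable for every x ∈ ℝⁿ. Let p₀ ∈ ℝⁿ and define u₋(x) := −(1/c_n) ∫_{ℝⁿ} log(|y|/|x−y|) f(y) dy, u₂(x) := −(1/c_n) ∫_{ℝⁿ ∖ B(p₀,10)} log(|y|/|x−y|) f(y) dy, and c̄ := −(1/c_n) ∫_{B(p₀,10)} log|y| · f(y) dy. Then ∫_{B(p₀,2)} e^{n u₋(z)} dz ≤ C₁ · e^{n u₂(p₀)} · e^{n c̄}, where C₁ = e^{nβ/(4c_n)}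 · 12^{nβ/c_n} · ω_{n−1} 2ⁿ / n and ω_{n−1} denotes the (n−1)-dimensional surface measure of the unit sphere in ℝⁿ. -/
set_option maxHeartbeats 1000000


open MeasureTheory Metric Set
open scoped ENNReal

lemma cN_pos {n : ℕ} (hn : 1 ≤ n) : 0 < cN n := by
  have h2 : (0 : ℝ) < (n : ℝ) / 2 := by
    have : (0 : ℝ) < (n : ℝ) := by exact_mod_cast hn
    linarith
  have hg := Real.Gamma_pos_of_pos h2
  unfold cN
  positivity

/-- Integrability of `log ‖y‖` on balls in `ℝⁿ`, `n ≥ 1`. -/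
lemma integrableOn_log_norm_ball {n : ℕ} (hn : 1 ≤ n)
    (x : EuclideanSpace ℝ (Fin n)) (R : ℝ) :
    IntegrableOn (fun y : EuclideanSpace ℝ (Fin n) => Real.log ‖y‖) (ball x R) := by
  have hmeas : Measurable fun y : EuclideanSpace ℝ (Fin n) => Real.log ‖y‖ :=
    Real.measurable_log.comp measurable_norm
  set M : ℝ := max (‖x‖ + R) 1 with hM
  have hM1 : (1 : ℝ) ≤ M := le_max_right _ _
  have hlogM : 0 ≤ Real.log M := Real.log_nonneg hM1
  set g : EuclideanSpace ℝ (Fin n) → ℝ := fun y => max (-Real.log ‖y‖) 0 with hgdef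
  have hgmeas : Measurable g := hmeas.neg.max measurable_const
  have hg0 : ∀ y, 0 ≤ g y := fun y => le_max_right _ _
  -- layercake estimate for the global integral of `g`
  have hlayer : (∫⁻ y, ENNReal.ofReal (g y)) < ⊤ := by
    rw [lintegral_eq_lintegral_meas_le volume (ae_of_all _ hg0) hgmeas.aemeasurable]
    have hsub : ∀ t ∈ Ioi (0 : ℝ), volume {a : EuclideanSpace ℝ (Fin n) | t ≤ g a}
        ≤ ENNReal.ofReal (Real.exp (-t)) * volume (ball (0 : EuclideanSpace ℝ (Fin n)) 1) := by
      intro t ht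
      have ht0 : (0 : ℝ) < t := ht
      have hss : {a : EuclideanSpace ℝ (Fin n) | t ≤ g a} ⊆ closedBall (0 : EuclideanSpace ℝ (Fin n)) (Real.exp (-t)) := by
        intro a ha
        simp only [mem_setOf_eq, hgdef] at ha
        have h2 : t ≤ -Real.log ‖a‖ := by
          rcases le_max_iff.1 ha with h | h
          · exact h
          · linarith
        have h3 : ‖a‖ ≤ Real.exp (-t) := by
          by_contra h4
          push_neg at h4
          have hpos : 0 < ‖a‖ := lt_trans (Real.exp_pos _) h4
          have := (Real.lt_log_iff_exp_lt hpos).2 h4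
          linarith
        simpa [mem_closedBall_zero_iff] using h3
      calc volume {a : EuclideanSpace ℝ (Fin n) | t ≤ g a} ≤ volume (closedBall (0 : EuclideanSpace ℝ (Fin n)) (Real.exp (-t))) :=
            measure_mono hss
        _ = ENNReal.ofReal (Real.exp (-t) ^ Module.finrank ℝ (EuclideanSpace ℝ (Fin n))) * volume (ball (0 : EuclideanSpace ℝ (Fin n)) 1) :=
            Measure.addHaar_closedBall _ _ (Real.exp_nonneg _)
        _ ≤ ENNReal.ofReal (Real.exp (-t)) * volume (ball (0 : EuclideanSpace ℝ (Fin n)) 1) := by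
            gcongr
            have hle1 : Real.exp (-t) ≤ 1 := Real.exp_le_one_iff.2 (by linarith)
            have hrank : Module.finrank ℝ (EuclideanSpace ℝ (Fin n)) = n := finrank_euclideanSpace_fin
            calc Real.exp (-t) ^ Module.finrank ℝ (EuclideanSpace ℝ (Fin n)) ≤ Real.exp (-t) ^ 1 := by
                  apply pow_le_pow_of_le_one (Real.exp_nonneg _) hle1
                  rw [hrank]; exact hn
              _ = Real.exp (-t) := pow_one _
    calc (∫⁻ t in Ioi (0:ℝ), volume {a : EuclideanSpace ℝ (Fin n) | t ≤ g a})
        ≤ ∫⁻ t in Ioi (0:ℝ), ENNReal.ofReal (Real.exp (-t)) * volume (ball (0 : EuclideanSpace ℝ (Fin n)) 1) :=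
          setLIntegral_mono' measurableSet_Ioi hsub
      _ = (∫⁻ t in Ioi (0:ℝ), ENNReal.ofReal (Real.exp (-t))) * volume (ball (0 : EuclideanSpace ℝ (Fin n)) 1) :=
          lintegral_mul_const' _ _ measure_ball_lt_top.ne
      _ < ⊤ := by
          apply ENNReal.mul_lt_top _ measure_ball_lt_top
          have hexp : IntegrableOn (fun t : ℝ => Real.exp (-t)) (Ioi (0:ℝ)) := by
            simpa using exp_neg_integrableOn_Ioi 0 (by norm_num : (0:ℝ) < 1)
          exact hexp.setLIntegral_lt_top
  refine ⟨hmeas.aestronglyMeasurable, ?_⟩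
  rw [hasFiniteIntegral_iff_norm]
  have hbd : ∀ y ∈ ball x R, ENNReal.ofReal ‖Real.log ‖y‖‖
      ≤ ENNReal.ofReal (g y) + ENNReal.ofReal (Real.log M) := by
    intro y hy
    have hy1 : ‖y‖ ≤ M := by
      have : ‖y‖ ≤ ‖x‖ + R := by
        have := mem_ball_iff_norm.1 hy
        have h2 := norm_sub_norm_le y x
        linarith [h2.trans this.le]
      exact this.trans (le_max_left _ _)
    have key : ‖Real.log ‖y‖‖ ≤ g y + Real.log M := by
      rcases le_or_gt (Real.log ‖y‖) 0 with h | h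
      · have : ‖Real.log ‖y‖‖ = -Real.log ‖y‖ := by
          rw [Real.norm_eq_abs, abs_of_nonpos h]
        rw [this]
        have : -Real.log ‖y‖ ≤ g y := le_max_left _ _
        linarith
      · have hpos : (0 : ℝ) < ‖y‖ := by
          by_contra h2
          push_neg at h2
          have : ‖y‖ = 0 := le_antisymm h2 (norm_nonneg _)
          rw [this] at h; simp [Real.log_zero] at h
        have : ‖Real.log ‖y‖‖ = Real.log ‖y‖ := by
          rw [Real.norm_eq_abs, abs_of_pos h]
        rw [this]
        have := Real.log_le_log hpos hy1
        have := hg0 y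
        linarith
    calc ENNReal.ofReal ‖Real.log ‖y‖‖ ≤ ENNReal.ofReal (g y + Real.log M) :=
        ENNReal.ofReal_le_ofReal key
      _ ≤ ENNReal.ofReal (g y) + ENNReal.ofReal (Real.log M) := ENNReal.ofReal_add_le
  calc (∫⁻ y in ball x R, ENNReal.ofReal ‖Real.log ‖y‖‖)
      ≤ ∫⁻ y in ball x R, (ENNReal.ofReal (g y) + ENNReal.ofReal (Real.log M)) :=
        setLIntegral_mono' measurableSet_ball hbd
    _ = (∫⁻ y in ball x R, ENNReal.ofReal (g y)) + ∫⁻ _ in ball x R, ENNReal.ofReal (Real.log M) :=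
        lintegral_add_left (hgmeas.ennreal_ofReal) _
    _ ≤ (∫⁻ y, ENNReal.ofReal (g y)) + ENNReal.ofReal (Real.log M) * volume (ball x R) := by
        gcongr
        · exact Measure.restrict_le_self
        · rw [lintegral_const, Measure.restrict_apply MeasurableSet.univ, univ_inter]
    _ < ⊤ := by
        apply ENNReal.add_lt_top.2
        exact ⟨hlayer, ENNReal.mul_lt_top ENNReal.ofReal_lt_top measure_ball_lt_top⟩

/-- Proposition 3.8. With `u₋ = -logPot f`, far-field part `u₂`
and constant `c̄`, one has
`∫_{B(p₀,2)} e^{n u₋} ≤ C₁ e^{n u₂(p₀)} e^{n c̄}` where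
`C₁ = e^{nβ/(4c_n)} · 12^{nβ/c_n} · ω_{n-1} 2ⁿ / n` and
`ω_{n-1} = n · |B(0,1)|` is the surface measure of the unit sphere. -/
theorem integral_exp_neg_logPot_ball_le
    (n : ℕ) (hn : 2 ≤ n)
    (f : EuclideanSpace ℝ (Fin n) → ℝ)
    (hfc : Continuous f) (hf0 : ∀ y, 0 ≤ f y) (hfi : Integrable f)
    (hlog : ∀ x : EuclideanSpace ℝ (Fin n),
      Integrable (fun y => Real.log (‖y‖ / ‖x - y‖) * f y))
    (p₀ : EuclideanSpace ℝ (Fin n)) (β : ℝ) (hβ : (∫ y, f y) = β) :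
    (∫ z in ball p₀ 2, Real.exp ((n : ℝ) * (-(logPot n f z)))) ≤
      (Real.exp ((n : ℝ) * β / (4 * cN n)) * (12 : ℝ) ^ ((n : ℝ) * β / cN n) *
          ((n : ℝ) * (volume (ball (0 : EuclideanSpace ℝ (Fin n)) 1)).toReal) *
          2 ^ (n : ℝ) / n) *
        Real.exp ((n : ℝ) *
          (-(1 / cN n) * ∫ y in (ball p₀ 10)ᶜ, Real.log (‖y‖ / ‖p₀ - y‖) * f y)) *
        Real.exp ((n : ℝ) *
          (-(1 / cN n) * ∫ y in ball p₀ 10, Real.log ‖y‖ * f y)) := by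
  have hn1 : 1 ≤ n := le_trans (by norm_num) hn
  haveI : Nontrivial (EuclideanSpace ℝ (Fin n)) := by
    apply Module.nontrivial_of_finrank_pos (R := ℝ)
    rw [finrank_euclideanSpace_fin]
    omega
  set c : ℝ := cN n with hcdef
  have hc : 0 < c := cN_pos hn1
  set S : Set (EuclideanSpace ℝ (Fin n)) := ball p₀ 10 with hSdef
  -- a bound for f on S
  obtain ⟨Mf, hMf⟩ : ∃ Mf : ℝ, ∀ y ∈ closedBall p₀ 10, ‖f y‖ ≤ Mf :=
    (isCompact_closedBall p₀ 10).exists_bound_of_continuousOn hfc.continuousOn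
  -- integrability of log ‖y‖ * f y on S
  have hLS : IntegrableOn (fun y : EuclideanSpace ℝ (Fin n) => Real.log ‖y‖ * f y) S := by
    have hbase : IntegrableOn (fun y : EuclideanSpace ℝ (Fin n) => Mf * abs (Real.log ‖y‖)) S :=
      ((integrableOn_log_norm_ball hn1 p₀ 10).abs.const_mul Mf)
    have hm : Measurable fun y : EuclideanSpace ℝ (Fin n) => Real.log ‖y‖ * f y :=
      (Real.measurable_log.comp measurable_norm).mul hfc.measurable
    refine hbase.integrable.mono hm.aestronglyMeasurable ?_
    filter_upwards [ae_restrict_mem measurableSet_ball] with y hy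
    have h1 : ‖f y‖ ≤ Mf := hMf y (ball_subset_closedBall hy)
    have h2 : (0:ℝ) ≤ Mf := le_trans (norm_nonneg _) h1
    have h3 : abs (f y) ≤ Mf := by simpa [Real.norm_eq_abs] using h1
    have h4 : (0:ℝ) ≤ abs (Real.log ‖y‖) := abs_nonneg _
    simp only [norm_mul, Real.norm_eq_abs]
    calc abs (Real.log ‖y‖) * abs (f y) ≤ abs (Real.log ‖y‖) * Mf :=
          mul_le_mul_of_nonneg_left h3 h4
      _ = Mf * abs (Real.log ‖y‖) := by ring
      _ ≤ abs (Mf * abs (Real.log ‖y‖)) := le_abs_self _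
      _ = abs Mf * abs (abs (Real.log ‖y‖)) := abs_mul _ _
  -- f has small mass bounds
  have hfnn : (0 : EuclideanSpace ℝ (Fin n) → ℝ) ≤ᵐ[volume] f :=
    ae_of_all _ fun y => hf0 y
  have hfS : ∫ y in S, f y ≤ β := by
    rw [← hβ]; exact setIntegral_le_integral hfi hfnn
  have hfSc : ∫ y in Sᶜ, f y ≤ β := by
    rw [← hβ]; exact setIntegral_le_integral hfi hfnn
  have hlog12 : (0:ℝ) ≤ Real.log 12 := Real.log_nonneg (by norm_num)
  -- abbreviations
  set A : ℝ := -(1 / c) * ∫ y in Sᶜ, Real.log (‖y‖ / ‖p₀ - y‖) * f y with hA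
  set B : ℝ := -(1 / c) * ∫ y in S, Real.log ‖y‖ * f y with hB
  -- pointwise bound on the ball
  have hpt : ∀ z ∈ ball p₀ 2, -(logPot n f z) ≤ β / (4 * c) + β / c * Real.log 12 + A + B := by
    intro z hz
    have hzp : dist z p₀ < 2 := mem_ball.mp hz
    -- near part
    have hnear : (∫ y in S, Real.log ‖y‖ * f y) - Real.log 12 * β
        ≤ ∫ y in S, Real.log (‖y‖ / ‖z - y‖) * f y := by
      have hint1 : IntegrableOn (fun y : EuclideanSpace ℝ (Fin n) => Real.log ‖y‖ * f y - Real.log 12 * f y) S :=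
        hLS.sub ((hfi.const_mul (Real.log 12)).integrableOn)
      have hmono : (∫ y in S, (Real.log ‖y‖ * f y - Real.log 12 * f y))
          ≤ ∫ y in S, Real.log (‖y‖ / ‖z - y‖) * f y := by
        apply integral_mono_ae hint1 ((hlog z).integrableOn)
        have hz0 : ∀ᵐ y : EuclideanSpace ℝ (Fin n), y ≠ z := by
          have h := measure_singleton (μ := (volume : Measure (EuclideanSpace ℝ (Fin n)))) z
          rw [ae_iff]
          simp only [Classical.not_not, Set.setOf_eq_eq_singleton]
          exact h
        filter_upwards [ae_restrict_of_ae hz0, ae_restrict_mem measurableSet_ball] with y hyz hyS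
        have hfy := hf0 y
        rcases eq_or_ne (‖y‖) 0 with h0 | h0
        · rw [h0]
          simp only [zero_div, Real.log_zero, zero_mul]
          have : 0 ≤ Real.log 12 * f y := mul_nonneg hlog12 hfy
          linarith
        · have hzy : ‖z - y‖ ≠ 0 := by
            simp only [ne_eq, norm_eq_zero, sub_eq_zero]
            exact fun h => hyz h.symm
          rw [Real.log_div h0 hzy]
          have h12 : ‖z - y‖ ≤ 12 := by
            have h2 : dist y p₀ < 10 := mem_ball.mp hyS
            calc ‖z - y‖ = dist z y := (dist_eq_norm z y).symm
              _ ≤ dist z p₀ + dist p₀ y := dist_triangle _ _ _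
              _ ≤ dist z p₀ + dist y p₀ := by rw [dist_comm p₀ y]
              _ ≤ 12 := by linarith
          have hzypos : 0 < ‖z - y‖ := lt_of_le_of_ne (norm_nonneg _) (Ne.symm hzy)
          have hll : Real.log ‖z - y‖ ≤ Real.log 12 := Real.log_le_log hzypos h12
          have hm := mul_le_mul_of_nonneg_right hll hfy
          have hexp : (Real.log ‖y‖ - Real.log ‖z - y‖) * f y
              = Real.log ‖y‖ * f y - Real.log ‖z - y‖ * f y := by ring
          rw [hexp]
          linarith
      have heq : (∫ y in S, (Real.log ‖y‖ * f y - Real.log 12 * f y))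
          = (∫ y in S, Real.log ‖y‖ * f y) - Real.log 12 * ∫ y in S, f y := by
        rw [integral_sub hLS ((hfi.const_mul (Real.log 12)).integrableOn),
          integral_const_mul _ _]
      rw [heq] at hmono
      have : Real.log 12 * ∫ y in S, f y ≤ Real.log 12 * β :=
        mul_le_mul_of_nonneg_left hfS hlog12
      linarith
    -- far part
    have hfar : (∫ y in Sᶜ, Real.log (‖y‖ / ‖p₀ - y‖) * f y) - β / 4
        ≤ ∫ y in Sᶜ, Real.log (‖y‖ / ‖z - y‖) * f y := by
      have hint1 : IntegrableOn
          (fun y : EuclideanSpace ℝ (Fin n) => Real.log (‖y‖ / ‖p₀ - y‖) * f y - (1/4) * f y) Sᶜ :=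
        ((hlog p₀).integrableOn).sub ((hfi.const_mul (1/4)).integrableOn)
      have hmono : (∫ y in Sᶜ, (Real.log (‖y‖ / ‖p₀ - y‖) * f y - (1/4) * f y))
          ≤ ∫ y in Sᶜ, Real.log (‖y‖ / ‖z - y‖) * f y := by
        apply setIntegral_mono_on hint1 ((hlog z).integrableOn) measurableSet_ball.compl
        intro y hy
        have hfy := hf0 y
        have hpy : (10:ℝ) ≤ dist y p₀ := by
          have := hy
          simp only [hSdef, mem_compl_iff, mem_ball, not_lt] at this
          exact this
        have hpy' : (10:ℝ) ≤ ‖p₀ - y‖ := by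
          rw [← dist_eq_norm, dist_comm]; exact hpy
        have hzy' : (8:ℝ) ≤ ‖z - y‖ := by
          rw [← dist_eq_norm]
          have h1 := dist_triangle p₀ z y
          have h2 : dist p₀ y = dist y p₀ := dist_comm _ _
          have h3 : dist p₀ z = dist z p₀ := dist_comm _ _
          linarith
        rcases eq_or_ne (‖y‖) 0 with h0 | h0
        · rw [h0]
          simp only [zero_div, Real.log_zero, zero_mul]
          linarith [mul_nonneg (by norm_num : (0:ℝ) ≤ 1/4) hfy]
        · have hp0 : ‖p₀ - y‖ ≠ 0 := by positivity
          have hz0 : ‖z - y‖ ≠ 0 := by positivity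
          rw [Real.log_div h0 hp0, Real.log_div h0 hz0]
          have hkey : Real.log ‖z - y‖ ≤ Real.log ‖p₀ - y‖ + 1/4 := by
            have h65 : ‖z - y‖ ≤ (6/5) * ‖p₀ - y‖ := by
              have h1 : ‖z - y‖ ≤ ‖z - p₀‖ + ‖p₀ - y‖ := by
                have := norm_sub_le_norm_sub_add_norm_sub z p₀ y
                linarith [norm_sub_le (z - p₀) (y - p₀)]
              have h2 : ‖z - p₀‖ < 2 := by rw [← dist_eq_norm]; exact hzp
              linarith
            have h2 : Real.log ‖z - y‖ ≤ Real.log ((6/5) * ‖p₀ - y‖) :=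
              Real.log_le_log (by linarith) h65
            rw [Real.log_mul (by norm_num) hp0] at h2
            have h3 : Real.log (6/5) ≤ 1/4 := by
              have := Real.log_le_sub_one_of_pos (by norm_num : (0:ℝ) < 6/5)
              linarith
            linarith
          have hm := mul_le_mul_of_nonneg_right hkey hfy
          nlinarith
      have heq : (∫ y in Sᶜ, (Real.log (‖y‖ / ‖p₀ - y‖) * f y - (1/4) * f y))
          = (∫ y in Sᶜ, Real.log (‖y‖ / ‖p₀ - y‖) * f y) - (1/4) * ∫ y in Sᶜ, f y := by
        rw [integral_sub ((hlog p₀).integrableOn) ((hfi.const_mul (1/4)).integrableOn),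
          integral_const_mul _ _]
      rw [heq] at hmono
      have : (1/4 : ℝ) * ∫ y in Sᶜ, f y ≤ (1/4) * β :=
        mul_le_mul_of_nonneg_left hfSc (by norm_num)
      linarith
    -- combine
    have hsplit : (∫ y in S, Real.log (‖y‖ / ‖z - y‖) * f y)
        + (∫ y in Sᶜ, Real.log (‖y‖ / ‖z - y‖) * f y)
        = ∫ y, Real.log (‖y‖ / ‖z - y‖) * f y :=
      integral_add_compl measurableSet_ball (hlog z)
    have hlp : logPot n f z = (1/c) * ((∫ y in S, Real.log (‖y‖ / ‖z - y‖) * f y)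
        + (∫ y in Sᶜ, Real.log (‖y‖ / ‖z - y‖) * f y)) := by
      rw [hsplit]; rfl
    rw [hlp, hA, hB]
    have hsum : (∫ y in S, Real.log ‖y‖ * f y)
        + (∫ y in Sᶜ, Real.log (‖y‖ / ‖p₀ - y‖) * f y) - Real.log 12 * β - β / 4
        ≤ (∫ y in S, Real.log (‖y‖ / ‖z - y‖) * f y)
        + (∫ y in Sᶜ, Real.log (‖y‖ / ‖z - y‖) * f y) := by linarith
    have hmul := mul_le_mul_of_nonneg_left hsum (le_of_lt (one_div_pos.2 hc))
    have e1 : β / (4 * c) = (1/c) * (β / 4) := by ring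
    have e2 : β / c * Real.log 12 = (1/c) * (Real.log 12 * β) := by ring
    rw [e1, e2]
    nlinarith [hmul]
  -- the constant on the right-hand side
  set v : ℝ := (volume (ball (0 : EuclideanSpace ℝ (Fin n)) 1)).toReal with hv
  have hv0 : 0 ≤ v := ENNReal.toReal_nonneg
  set C : ℝ := Real.exp ((n:ℝ) * β / (4 * c)) * (12 : ℝ) ^ ((n:ℝ) * β / c) *
      Real.exp ((n:ℝ) * A) * Real.exp ((n:ℝ) * B) with hC
  have hC0 : 0 ≤ C := by
    have h12 : (0:ℝ) < (12 : ℝ) ^ ((n:ℝ) * β / c) := Real.rpow_pos_of_pos (by norm_num) _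
    positivity
  -- pointwise bound for the exponential
  have hexp : ∀ z ∈ ball p₀ 2, Real.exp ((n:ℝ) * (-(logPot n f z))) ≤ C := by
    intro z hz
    have h1 := hpt z hz
    have h2 : (n:ℝ) * (-(logPot n f z))
        ≤ (n:ℝ) * (β / (4 * c) + β / c * Real.log 12 + A + B) :=
      mul_le_mul_of_nonneg_left h1 (Nat.cast_nonneg n)
    calc Real.exp ((n:ℝ) * (-(logPot n f z))) ≤
        Real.exp ((n:ℝ) * (β / (4 * c) + β / c * Real.log 12 + A + B)) :=
          Real.exp_le_exp.2 h2
      _ = C := by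
          rw [hC]
          rw [Real.rpow_def_of_pos (by norm_num : (0:ℝ) < 12)]
          rw [← Real.exp_add, ← Real.exp_add, ← Real.exp_add]
          congr 1
          ring
  -- volume of the ball
  have hvol : (volume (ball p₀ 2)).toReal = 2 ^ n * v := by
    rw [Measure.addHaar_ball volume p₀ (by norm_num : (0:ℝ) ≤ 2)]
    rw [ENNReal.toReal_mul, ENNReal.toReal_ofReal (by positivity)]
    congr 2
    exact finrank_euclideanSpace_fin
  -- the final bound
  have hfinal : (∫ z in ball p₀ 2, Real.exp ((n : ℝ) * (-(logPot n f z))))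
      ≤ 2 ^ n * v * C := by
    by_cases hInt : IntegrableOn (fun z : EuclideanSpace ℝ (Fin n) => Real.exp ((n:ℝ) * (-(logPot n f z)))) (ball p₀ 2)
    · calc (∫ z in ball p₀ 2, Real.exp ((n:ℝ) * (-(logPot n f z))))
          ≤ ∫ _ in ball p₀ 2, C := by
            apply setIntegral_mono_on hInt
              (integrableOn_const measure_ball_lt_top.ne enorm_ne_top) measurableSet_ball hexp
        _ = (volume (ball p₀ 2)).toReal * C := by
            rw [setIntegral_const, smul_eq_mul]; rfl
        _ = 2 ^ n * v * C := by rw [hvol]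
    · rw [integral_undef hInt]
      positivity
  -- rewrite RHS
  have hne : (n:ℝ) ≠ 0 := by
    have : (0:ℝ) < (n:ℝ) := by exact_mod_cast lt_of_lt_of_le (by norm_num) hn
    exact this.ne'
  have hrpow : (2:ℝ) ^ (n:ℝ) = (2:ℝ) ^ n := Real.rpow_natCast 2 n
  calc (∫ z in ball p₀ 2, Real.exp ((n : ℝ) * (-(logPot n f z)))) ≤ 2 ^ n * v * C := hfinal
    _ = (Real.exp ((n : ℝ) * β / (4 * c)) * (12 : ℝ) ^ ((n : ℝ) * β / c) *
          ((n : ℝ) * v) * 2 ^ (n : ℝ) / n) *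
        Real.exp ((n : ℝ) * A) * Real.exp ((n : ℝ) * B) := by
        rw [hC, hrpow]
        field_simp
end

section
/- Let n ≥ 1, let x, y ∈ ℝⁿ with |x−y| = 2, let L ≥ 0 and let γ : [0,L] → ℝⁿ be a 1-Lipschitz curve with γ(0) = x and γ(L) = y. Let 0 < ε ≤ 1/20 and let E ⊆ ℝⁿ be a set whose one-dimensional Hausdorff content satisfies H¹_∞(E) < 10 ε. Then the Lebesgue measure of the set { t ∈ [0,L] : γ(t) ∉ E } is strictly greater than 3/2. -/
open MeasureTheory Metric Set
open scoped ENNReal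

/-- arc-length estimate. If `|x-y| = 2`, `γ : [0,L] → ℝⁿ` is a
1-Lipschitz curve from `x` to `y`, `0 < ε ≤ 1/20`, and `E` has one-dimensional
Hausdorff content `< 10 ε`, then the Lebesgue measure of
`{t ∈ [0,L] : γ(t) ∉ E}` is strictly greater than `3/2`. -/
theorem arclength_outside_small_content_set
    (n : ℕ) (hn : 1 ≤ n)
    (x y : EuclideanSpace ℝ (Fin n)) (hxy : dist x y = 2)
    (L : ℝ) (hL : 0 ≤ L) (γ : ℝ → EuclideanSpace ℝ (Fin n))
    (hγ : LipschitzOnWith 1 γ (Set.Icc 0 L)) (hγ0 : γ 0 = x) (hγL : γ L = y)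
    (ε : ℝ) (hε0 : 0 < ε) (hε : ε ≤ 1 / 20)
    (E : Set (EuclideanSpace ℝ (Fin n)))
    (hE : H1content E < ENNReal.ofReal (10 * ε)) :
    ENNReal.ofReal (3 / 2) < volume {t : ℝ | t ∈ Set.Icc 0 L ∧ γ t ∉ E} := by
  classical
  -- extract a good cover
  rw [H1content, iInf_lt_iff] at hE
  obtain ⟨c, hc⟩ := hE
  rw [iInf_lt_iff] at hc
  obtain ⟨hcov, hsum⟩ := hc
  -- the projection direction
  have hyx : ‖y - x‖ = 2 := by
    rw [← dist_eq_norm, dist_comm, hxy]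
  set u : EuclideanSpace ℝ (Fin n) := ‖y - x‖⁻¹ • (y - x) with hu
  have hunorm : ‖u‖ = 1 := by
    rw [hu, norm_smul, norm_inv, norm_norm, hyx]; norm_num
  set π : EuclideanSpace ℝ (Fin n) → ℝ := fun z => (inner ℝ u z : ℝ) with hπdef
  have hπ : LipschitzWith 1 π := by
    apply LipschitzWith.of_dist_le_mul
    intro a b
    have : |(inner ℝ u (a - b) : ℝ)| ≤ ‖u‖ * ‖a - b‖ := abs_real_inner_le_norm u (a - b)
    rw [hunorm, one_mul] at this
    simpa [hπdef, Real.dist_eq, inner_sub_right, dist_eq_norm, NNReal.coe_one, one_mul]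
      using this
  have hkey : π y - π x = 2 := by
    have : π y - π x = (inner ℝ u (y - x) : ℝ) := by
      rw [hπdef]; simp [inner_sub_right]
    rw [this, hu, real_inner_smul_left, real_inner_self_eq_norm_sq, hyx]
    norm_num
  set f : ℝ → ℝ := fun t => π (γ t) with hf
  have hfLip : LipschitzOnWith 1 f (Set.Icc 0 L) := by
    have := hπ.comp_lipschitzOnWith hγ
    rw [one_mul] at this
    exact this
  have hf0 : f 0 = π x := by rw [hf]; simp [hγ0]
  have hfL : f L = π y := by rw [hf]; simp [hγL]
  have hle : f 0 ≤ f L := by rw [hf0, hfL]; linarith [hkey]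
  -- intermediate value theorem
  have hivt : Set.Icc (f 0) (f L) ⊆ f '' Set.Icc 0 L :=
    intermediate_value_Icc hL hfLip.continuousOn
  -- split [0,L] into good and bad parts
  set G : Set ℝ := {t : ℝ | t ∈ Set.Icc 0 L ∧ γ t ∉ E} with hG
  set B : Set ℝ := {t : ℝ | t ∈ Set.Icc 0 L ∧ γ t ∈ E} with hB
  have hsplit : f '' Set.Icc 0 L ⊆ f '' G ∪ f '' B := by
    rintro - ⟨t, ht, rfl⟩
    by_cases hEt : γ t ∈ E
    · exact Or.inr ⟨t, ⟨ht, hEt⟩, rfl⟩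
    · exact Or.inl ⟨t, ⟨ht, hEt⟩, rfl⟩
  -- the image of the good set has measure at most the measure of the good set
  have hGsub : G ⊆ Set.Icc 0 L := fun t ht => ht.1
  have hgood : volume (f '' G) ≤ volume G := by
    have h := (hfLip.mono hGsub).hausdorffMeasure_image_le (d := 1) zero_le_one
    rw [MeasureTheory.hausdorffMeasure_real] at h
    simpa using h
  -- the image of the bad set is contained in π '' E
  have hbadsub : f '' B ⊆ π '' E := by
    rintro - ⟨t, ht, rfl⟩
    exact ⟨γ t, ht.2, rfl⟩
  -- π '' E has small measure
  have hπE : volume (π '' E) < ENNReal.ofReal (10 * ε) := by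
    have hcov' : π '' E ⊆ ⋃ i, Set.Ioo (π (c i).1 - (c i).2) (π (c i).1 + (c i).2) := by
      rintro - ⟨z, hz, rfl⟩
      obtain ⟨i, hi⟩ := Set.mem_iUnion.1 (hcov hz)
      refine Set.mem_iUnion.2 ⟨i, ?_⟩
      have hd : dist (π z) (π (c i).1) ≤ dist z (c i).1 := by
        simpa using hπ.dist_le_mul z (c i).1
      have hd2 : |π z - π (c i).1| < (c i).2 :=
        lt_of_le_of_lt (by simpa [Real.dist_eq] using hd) (mem_ball.1 hi)
      constructor <;> [linarith [abs_lt.1 hd2] ; linarith [abs_lt.1 hd2]]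
    calc volume (π '' E)
        ≤ ∑' i, volume (Set.Ioo (π (c i).1 - (c i).2) (π (c i).1 + (c i).2)) :=
          le_trans (measure_mono hcov') (measure_iUnion_le _)
      _ = ∑' i, ENNReal.ofReal (2 * (c i).2) := by
          congr 1; funext i; rw [Real.volume_Ioo]; congr 1; ring
      _ < ENNReal.ofReal (10 * ε) := hsum
  -- put everything together
  have hmain : ENNReal.ofReal 2 ≤ volume G + volume (π '' E) := by
    calc ENNReal.ofReal 2 = volume (Set.Icc (f 0) (f L)) := by
          rw [Real.volume_Icc, hf0, hfL]
          congr 1; linarith [hkey]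
      _ ≤ volume (f '' G ∪ f '' B) := measure_mono (hivt.trans hsplit)
      _ ≤ volume (f '' G) + volume (f '' B) := measure_union_le _ _
      _ ≤ volume G + volume (π '' E) :=
          add_le_add hgood (measure_mono hbadsub)
  by_contra hcon
  push_neg at hcon
  have hεhalf : ENNReal.ofReal (10 * ε) ≤ ENNReal.ofReal (1 / 2) :=
    ENNReal.ofReal_le_ofReal (by linarith)
  have : volume G + volume (π '' E) < ENNReal.ofReal (3 / 2) + ENNReal.ofReal (1 / 2) :=
    ENNReal.add_lt_add_of_le_of_lt (lt_of_le_of_lt hcon (by simp)).ne hcon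
      (lt_of_lt_of_le hπE hεhalf)
  rw [← ENNReal.ofReal_add (by norm_num) (by norm_num)] at this
  norm_num at this
  rw [show ENNReal.ofReal 2 = 2 by norm_num] at hmain
  exact absurd hmain (not_le.2 this)
end
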